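/- Let G be a finite set, d ∈ ℕ with d ≥ 1, p ∈ ℕ with p ≥ 1, and σ : G → ℤ^d any map. For a ∈ ℝ^G define finitely supported functions c, v : ℤ^G × ℤ^d → ℝ by c(−e_m, σ(m)) = a_m and v(e_m, −σ(m)) = a_m for m ∈ G (and both zero elsewhere), where e_m denotes the standard basis vectors of ℤ^G. Then for every k ∈ G there exists a polynomial Q in the variables (X_m)_{m ∈ G} with real coefficients, independent of a, such that for all a ∈ ℝ^G: ((c ⋆ v)^{⋆p} ⋆ c)(−e_k, σ(k)) = a_k · Q((a_m²)_{m ∈ G}). In particular this quantity is odd in a_k and even in each a_m with m ≠ k. -/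

import Mathlib

open scoped BigOperators

noncomputable section

/-- Convolution of real-valued functions on a lattice `L`. -/
def convR {L : Type} [AddCommGroup L] (a b : L → ℝ) : L → ℝ :=
  fun m => ∑' k : L, a k * b (m - k)

/-- `p`-fold convolution power (`convPowR a 0` is the convolution identity δ₀). -/
def convPowR {L : Type} [AddCommGroup L] [DecidableEq L] (a : L → ℝ) : ℕ → (L → ℝ)
  | 0 => fun m => if m = 0 then 1 else 0
  | n + 1 => convR (convPowR a n) a

/-- The function `c` supported on `{(−e_m, σ(m)) : m ∈ G}` with values `a_m`. -/
def cFun {G : Type} [Fintype G] [DecidableEq G] {d : ℕ} (σ : G → Fin d → ℤ) (a : G → ℝ) :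
    (G → ℤ) × (Fin d → ℤ) → ℝ :=
  fun m => ∑ j : G, if m = (-(Pi.single j 1), σ j) then a j else 0

/-- The function `v` supported on `{(e_m, −σ(m)) : m ∈ G}` with values `a_m`. -/
def vFun {G : Type} [Fintype G] [DecidableEq G] {d : ℕ} (σ : G → Fin d → ℤ) (a : G → ℝ) :
    (G → ℤ) × (Fin d → ℤ) → ℝ :=
  fun m => ∑ j : G, if m = (Pi.single j 1, -(σ j)) then a j else 0

/-- The Q-equation value `((c ⋆ v)^{⋆p} ⋆ c)(−e_k, σ(k))`. -/
def Qval {G : Type} [Fintype G] [DecidableEq G] {d : ℕ} (σ : G → Fin d → ℤ) (p : ℕ)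
    (a : G → ℝ) (k : G) : ℝ :=
  convR (convPowR (convR (cFun σ a) (vFun σ a)) p) (cFun σ a) (-(Pi.single k 1), σ k)

namespace Stmt6Aux

open MvPolynomial Pointwise

variable {G : Type} [Fintype G] [DecidableEq G] {d : ℕ}

abbrev L (G : Type) (d : ℕ) : Type := (G → ℤ) × (Fin d → ℤ)

def wt (m : L G d) (j : G) : ZMod 2 := ((m.1 j : ℤ) : ZMod 2)

/-- `F` is a finitely supported polynomial representation of the family of functions `f a`,
with monomial parities matching `wt`. -/
def IsRep (f : (G → ℝ) → L G d → ℝ) (F : L G d → MvPolynomial G ℝ)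
    (S : Finset (L G d)) : Prop :=
  (∀ m ∉ S, F m = 0) ∧
  (∀ a m, f a m = eval a (F m)) ∧
  (∀ m, ∀ u ∈ (F m).support, ∀ j, ((u j : ℕ) : ZMod 2) = wt m j)

lemma isRep_cFun (σ : G → Fin d → ℤ) :
    IsRep (fun a => cFun σ a)
      (fun m => ∑ j : G, if m = (-(Pi.single j 1), σ j) then X j else 0)
      (Finset.univ.image fun j => (-(Pi.single j 1), σ j)) := by
  refine ⟨?_, ?_, ?_⟩
  · intro m hm
    refine Finset.sum_eq_zero fun j _ => ?_
    rw [if_neg]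
    intro h
    exact hm (Finset.mem_image.mpr ⟨j, Finset.mem_univ _, h.symm⟩)
  · intro a m
    rw [map_sum]
    refine Finset.sum_congr rfl fun j _ => ?_
    rw [apply_ite (eval a), eval_X, map_zero]
  · intro m u hu j
    obtain ⟨i, _, hui⟩ := Finset.mem_biUnion.mp (MvPolynomial.support_sum hu)
    by_cases h : m = (-(Pi.single i 1), σ i)
    · rw [if_pos h, support_X] at hui
      have hu' : u = Finsupp.single i 1 := Finset.mem_singleton.mp hui
      subst hu' h
      simp only [wt, Finsupp.single_apply, Pi.neg_apply, Pi.single_apply]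
      rcases eq_or_ne i j with hij | hij
      · subst hij; simp
      · simp [hij, Ne.symm hij]
    · rw [if_neg h] at hui
      simp at hui

lemma isRep_vFun (σ : G → Fin d → ℤ) :
    IsRep (fun a => vFun σ a)
      (fun m => ∑ j : G, if m = (Pi.single j 1, -(σ j)) then X j else 0)
      (Finset.univ.image fun j => (Pi.single j 1, -(σ j))) := by
  refine ⟨?_, ?_, ?_⟩
  · intro m hm
    refine Finset.sum_eq_zero fun j _ => ?_
    rw [if_neg]
    intro h
    exact hm (Finset.mem_image.mpr ⟨j, Finset.mem_univ _, h.symm⟩)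
  · intro a m
    rw [map_sum]
    refine Finset.sum_congr rfl fun j _ => ?_
    rw [apply_ite (eval a), eval_X, map_zero]
  · intro m u hu j
    obtain ⟨i, _, hui⟩ := Finset.mem_biUnion.mp (MvPolynomial.support_sum hu)
    by_cases h : m = (Pi.single i 1, -(σ i))
    · rw [if_pos h, support_X] at hui
      have hu' : u = Finsupp.single i 1 := Finset.mem_singleton.mp hui
      subst hu' h
      simp only [wt, Finsupp.single_apply, Pi.single_apply]
      rcases eq_or_ne i j with hij | hij
      · subst hij; simp
      · simp [hij, Ne.symm hij]
    · rw [if_neg h] at hui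
      simp at hui

lemma isRep_conv {f g : (G → ℝ) → L G d → ℝ} {F Fg : L G d → MvPolynomial G ℝ}
    {S T : Finset (L G d)} (hf : IsRep f F S) (hg : IsRep g Fg T) :
    IsRep (fun a => convR (f a) (g a))
      (fun m => ∑ k ∈ S, F k * Fg (m - k)) (S + T) := by
  obtain ⟨hfS, hfe, hfp⟩ := hf
  obtain ⟨hgS, hge, hgp⟩ := hg
  refine ⟨?_, ?_, ?_⟩
  · intro m hm
    refine Finset.sum_eq_zero fun x hx => ?_
    rcases eq_or_ne (Fg (m - x)) 0 with h | h
    · rw [h, mul_zero]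
    · exfalso
      have hT : m - x ∈ T := by by_contra hc; exact h (hgS _ hc)
      have := Finset.add_mem_add hx hT
      rw [add_sub_cancel] at this
      exact hm this
  · intro a m
    have hz : ∀ kk ∉ S, f a kk * g a (m - kk) = 0 := by
      intro kk hk
      rw [hfe, hfS kk hk, map_zero, zero_mul]
    show convR (f a) (g a) m = _
    rw [show convR (f a) (g a) m = ∑' kk : L G d, f a kk * g a (m - kk) from rfl]
    rw [tsum_eq_sum hz, map_sum]
    refine Finset.sum_congr rfl fun x _ => ?_
    rw [hfe, hge, map_mul]
  · intro m u hu j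
    obtain ⟨x, hx, hux⟩ := Finset.mem_biUnion.mp (MvPolynomial.support_sum hu)
    obtain ⟨u₁, h1, u₂, h2, rfl⟩ := Finset.mem_add.mp (MvPolynomial.support_mul _ _ hux)
    have e1 := hfp x u₁ h1 j
    have e2 := hgp (m - x) u₂ h2 j
    have : ((u₁ + u₂ : G →₀ ℕ) j : ZMod 2) = wt x j + wt (m - x) j := by
      rw [Finsupp.add_apply, Nat.cast_add, e1, e2]
    rw [this]
    simp only [wt, Prod.fst_sub, Pi.sub_apply]
    push_cast
    ring

lemma isRep_pow {f : (G → ℝ) → L G d → ℝ} {F : L G d → MvPolynomial G ℝ}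
    {S : Finset (L G d)} (hf : IsRep f F S) :
    ∀ n : ℕ, ∃ Fn Sn, IsRep (fun a => convPowR (f a) n) Fn Sn := by
  intro n
  induction n with
  | zero =>
    refine ⟨fun m => if m = 0 then 1 else 0, {0}, ?_, ?_, ?_⟩
    · intro m hm
      show (if m = 0 then (1 : MvPolynomial G ℝ) else 0) = 0
      rw [if_neg]
      simpa using hm
    · intro a m
      show (if m = 0 then (1:ℝ) else 0) = eval a (if m = 0 then 1 else 0)
      split_ifs <;> simp
    · intro m u hu j
      have hu' : u ∈ ((if m = 0 then (1 : MvPolynomial G ℝ) else 0)).support := hu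
      by_cases h : m = 0
      · rw [if_pos h] at hu'
        have : u = 0 := by
          by_contra hne
          simp [MvPolynomial.mem_support_iff, MvPolynomial.coeff_one] at hu'; exact hne hu'
        subst this h
        simp [wt]
      · rw [if_neg h] at hu'
        simp at hu'
  | succ n ih =>
    obtain ⟨Fn, Sn, h⟩ := ih
    exact ⟨_, _, isRep_conv h hf⟩

end Stmt6Aux

/-- Parity structure of the Q-equations: `((c ⋆ v)^{⋆p} ⋆ c)(−e_k, σ(k)) = a_k · Q({a_m²})`
for a polynomial `Q` independent of `a`; in particular the value is odd in `a_k` and even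
in each `a_m`, `m ≠ k`. -/
theorem stmt6 (G : Type) [Fintype G] [DecidableEq G] [Nonempty G]
    (d p : ℕ) (hd : 1 ≤ d) (hp : 1 ≤ p) (σ : G → Fin d → ℤ) (k : G) :
    (∃ Q : MvPolynomial G ℝ, ∀ a : G → ℝ,
        Qval σ p a k = a k * MvPolynomial.eval (fun j => a j ^ 2) Q) ∧
    (∀ a : G → ℝ, Qval σ p (Function.update a k (-(a k))) k = -Qval σ p a k) ∧
    (∀ a : G → ℝ, ∀ j : G, j ≠ k →
        Qval σ p (Function.update a j (-(a j))) k = Qval σ p a k) := by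
  classical
  obtain ⟨Fp, Sp, hrep⟩ :=
    Stmt6Aux.isRep_pow (Stmt6Aux.isRep_conv (Stmt6Aux.isRep_cFun σ) (Stmt6Aux.isRep_vFun σ)) p
  have hfull : ∃ Ff Sf, Stmt6Aux.IsRep
      (fun a => convR (convPowR (convR (cFun σ a) (vFun σ a)) p) (cFun σ a)) Ff Sf :=
    ⟨_, _, Stmt6Aux.isRep_conv hrep (Stmt6Aux.isRep_cFun σ)⟩
  obtain ⟨Ff, Sf, hS, he, hpar⟩ := hfull
  set pt : Stmt6Aux.L G d := (-(Pi.single k 1), σ k) with hpt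
  set P : MvPolynomial G ℝ := Ff pt with hPdef
  have hQval : ∀ a : G → ℝ, Qval σ p a k = MvPolynomial.eval a P := fun a => he a pt
  have hparP : ∀ u ∈ P.support, ∀ j : G, ((u j : ℕ) : ZMod 2) = if j = k then 1 else 0 := by
    intro u hu j
    rw [hpar pt u hu j]
    simp only [Stmt6Aux.wt, hpt, Pi.neg_apply, Pi.single_apply]
    rcases eq_or_ne j k with rfl | hjk
    · simp
    · simp [hjk, Ne.symm hjk]
  have hmod : ∀ u ∈ P.support, ∀ j : G, u j % 2 = if j = k then 1 else 0 := by
    intro u hu j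
    have h1 : ((u j % 2 : ℕ) : ZMod 2) = if j = k then 1 else 0 := by
      rw [ZMod.natCast_mod]; exact hparP u hu j
    rcases Nat.mod_two_eq_zero_or_one (u j) with h | h <;> rw [h] at h1 ⊢
    · rcases eq_or_ne j k with rfl | hjk
      · simp at h1
      · simp [hjk]
    · rcases eq_or_ne j k with rfl | hjk
      · simp
      · rw [if_neg hjk] at h1
        exact absurd h1 (by decide)
  set Q : MvPolynomial G ℝ :=
    ∑ u ∈ P.support, MvPolynomial.monomial (u.mapRange (· / 2) (Nat.zero_div 2))
      (MvPolynomial.coeff u P) with hQdef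
  have hmain : ∀ a : G → ℝ, Qval σ p a k = a k * MvPolynomial.eval (fun j => a j ^ 2) Q := by
    intro a
    rw [hQval a, MvPolynomial.eval_eq', hQdef, map_sum, Finset.mul_sum]
    refine Finset.sum_congr rfl fun u hu => ?_
    rw [MvPolynomial.eval_monomial]
    rw [Finsupp.prod_fintype _ _ (fun i => pow_zero _)]
    have key : ∀ i : G, a i ^ u i = (a i ^ 2) ^ (u i / 2) * (if i = k then a i else 1) := by
      intro i
      conv_lhs => rw [← Nat.div_add_mod (u i) 2]
      rw [pow_add, pow_mul, hmod u hu i]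
      congr 1
      split_ifs <;> simp
    calc MvPolynomial.coeff u P * ∏ i, a i ^ u i
        = MvPolynomial.coeff u P * ∏ i, ((a i ^ 2) ^ (u i / 2) * (if i = k then a i else 1)) := by
          rw [Finset.prod_congr rfl fun i _ => key i]
      _ = MvPolynomial.coeff u P *
            ((∏ i, (a i ^ 2) ^ (u i / 2)) * ∏ i, (if i = k then a i else 1)) := by
          rw [Finset.prod_mul_distrib]
      _ = a k * (MvPolynomial.coeff u P * ∏ i, (a i ^ 2) ^ ((u.mapRange (· / 2) (Nat.zero_div 2)) i)) := by
          rw [Finset.prod_ite_eq' Finset.univ k (fun i => a i)]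
          simp only [Finset.mem_univ, if_pos, Finsupp.mapRange_apply]
          ring
  refine ⟨⟨Q, hmain⟩, ?_, ?_⟩
  · intro a
    rw [hmain, hmain]
    have h2 : (fun j => Function.update a k (-(a k)) j ^ 2) = fun j => a j ^ 2 := by
      funext j
      rcases eq_or_ne j k with rfl | h
      · rw [Function.update_self]; ring
      · rw [Function.update_of_ne h]
    rw [Function.update_self, h2, neg_mul]
  · intro a j hjk
    rw [hmain, hmain]
    have h2 : (fun i => Function.update a j (-(a j)) i ^ 2) = fun i => a i ^ 2 := by
      funext i
      rcases eq_or_ne i j with rfl | h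
      · rw [Function.update_self]; ring
      · rw [Function.update_of_ne h]
    rw [Function.update_of_ne (Ne.symm hjk), h2]
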